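/- Let μ be the distribution with density M⁻¹x^{−α−1}h(log x) on [1,∞) (h periodic with period log b, vanishing logarithmically at x₀), fix 1 < x₀ < x₀+x₁ < x₀+x₂ < b, let n_k be an increasing sequence of positive integers with Σ 1/√(n_k) = 1, B_k = (−b^{n_k}x₂, −b^{n_k}x₁], D_k = (b^{n_k}x₀, b^{n_k}x₀+1], and let μ₁ be a distribution with μ₁(B_k) = 1/√(n_k) for all k and no mass outside ∪B_k. Then for every c ∈ ℝ, lim_{k→∞} μ*μ₁(D_k + c)/μ(D_k) = ∞. -/

import Mathlib

open MeasureTheory Filter Set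

noncomputable def conv (f g : ℝ → ℝ) (x : ℝ) : ℝ := ∫ u, f (x - u) * g u

def IsDensity (f : ℝ → ℝ) : Prop := (∀ x, 0 ≤ f x) ∧ (∫ x, f x) = 1

def LongTailedFun (f : ℝ → ℝ) : Prop :=
  (∀ᶠ x in atTop, 0 < f x) ∧
  ∀ a : ℝ, Tendsto (fun x => f (x + a) / f x) atTop (nhds 1)

def LongDensity (f : ℝ → ℝ) : Prop := IsDensity f ∧ LongTailedFun f

def SubexpDensity (f : ℝ → ℝ) : Prop :=
  LongDensity f ∧ Tendsto (fun x => conv f f x / f x) atTop (nhds 2)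

noncomputable def mconv (μ ν : Measure ℝ) : Measure ℝ :=
  (μ.prod ν).map (fun p : ℝ × ℝ => p.1 + p.2)

noncomputable def locMass (μ : Measure ℝ) (c x : ℝ) : ℝ := (μ (Ioc x (x + c))).toReal

def MemLDelta (μ : Measure ℝ) (c : ℝ) : Prop :=
  (∀ᶠ x in atTop, 0 < locMass μ c x) ∧
  ∀ a : ℝ, Tendsto (fun x => locMass μ c (x + a) / locMass μ c x) atTop (nhds 1)

def MemSDelta (μ : Measure ℝ) (c : ℝ) : Prop :=
  MemLDelta μ c ∧
  Tendsto (fun x => locMass (mconv μ μ) c x / locMass μ c x) atTop (nhds 2)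

def LLoc (μ : Measure ℝ) : Prop := ∀ c > 0, MemLDelta μ c
def SLoc (μ : Measure ℝ) : Prop := ∀ c > 0, MemSDelta μ c

def LAc (μ : Measure ℝ) : Prop :=
  ∃ g : ℝ → ℝ, LongDensity g ∧ μ = volume.withDensity (fun x => ENNReal.ofReal (g x))
def SAc (μ : Measure ℝ) : Prop :=
  ∃ g : ℝ → ℝ, SubexpDensity g ∧ μ = volume.withDensity (fun x => ENNReal.ofReal (g x))


set_option maxHeartbeats 1000000

private lemma aux_den (x₀ b α δ : ℝ) (hx₀ : 1 < x₀) (hb : x₀ < b) (hα : 0 < α)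
    (hδ0 : 0 < δ) (hδ1 : δ < 1)
    (h : ℝ → ℝ) (hper : Function.Periodic h (Real.log b))
    (hlog : ∀ x : ℝ, 0 < |x - x₀| → |x - x₀| < δ → h (Real.log x) = -1 / Real.log |x - x₀|)
    (φ : ℝ → ℝ)
    (hφ : φ = fun x => indicator (Ici (1:ℝ)) (fun y => y ^ (-α - 1) * h (Real.log y)) x)
    (M : ℝ) (hM0 : 0 < M)
    (μ : Measure ℝ) (hμ : μ = volume.withDensity (fun x => ENNReal.ofReal (M⁻¹ * φ x)))
    (hμfin : ∀ s : Set ℝ, μ s ≠ ⊤)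
    (n : ℕ) (hn : 0 < n)
    (hyδ : 1 / (b ^ n : ℝ) < δ) :
    (μ (Ioc ((b:ℝ) ^ n * x₀) ((b:ℝ) ^ n * x₀ + 1))).toReal
        ≤ M⁻¹ * (((b:ℝ) ^ n * x₀) ^ (-α - 1) * ((n : ℝ) * Real.log b)⁻¹)
      ∧ 0 < (μ (Ioc ((b:ℝ) ^ n * x₀) ((b:ℝ) ^ n * x₀ + 1))).toReal := by

  have hb1 : 1 < b := hx₀.trans hb
  have hb0 : 0 < b := lt_trans one_pos hb1
  have hlb : 0 < Real.log b := Real.log_pos hb1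
  have hx₀0 : 0 < x₀ := lt_trans one_pos hx₀
  set y : ℝ := (b:ℝ) ^ n with hydef
  have hy1 : 1 ≤ y := one_le_pow₀ hb1.le
  have hy0 : 0 < y := lt_of_lt_of_le one_pos hy1
  have hlogy : Real.log y = (n:ℝ) * Real.log b := by rw [hydef, Real.log_pow]
  clear_value y
  clear hydef
  have hnR : (1:ℝ) ≤ (n:ℝ) := by exact_mod_cast hn
  have hnlb : 0 < (n:ℝ) * Real.log b := by positivity
  -- the shift identity
  have hsh : ∀ x : ℝ, 0 < x → h (Real.log x) = h (Real.log (x / y)) := by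
    intro x hx
    have heq : Real.log (x / y) = Real.log x - (n:ℝ) * Real.log b := by
      rw [Real.log_div hx.ne' hy0.ne', hlogy]
    rw [heq, hper.sub_nat_mul_eq]
  -- pointwise density evaluation on the interval
  have hdens : ∀ x : ℝ, y * x₀ < x → x ≤ y * x₀ + 1 →
      M⁻¹ * φ x = M⁻¹ * (x ^ (-α - 1) * ((- Real.log (x / y - x₀))⁻¹)) ∧
      0 < - Real.log (x / y - x₀) := by
    intro x hx1 hx2
    have hx0 : (1:ℝ) ≤ x := by nlinarith
    have hxpos : (0:ℝ) < x := by linarith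
    have ht0 : 0 < x / y - x₀ := by
      rw [sub_pos, lt_div_iff₀ hy0]; nlinarith
    have ht1 : x / y - x₀ ≤ 1 / y := by
      rw [sub_le_iff_le_add, div_le_iff₀ hy0, add_mul, one_div, inv_mul_cancel₀ hy0.ne']
      linarith
    have htδ : (x / y - x₀) < δ := lt_of_le_of_lt ht1 hyδ
    have htlt1 : x / y - x₀ < 1 := lt_trans htδ hδ1
    have hlt : Real.log (x / y - x₀) < 0 := Real.log_neg ht0 htlt1
    have habs : |x / y - x₀| = x / y - x₀ := abs_of_pos ht0
    have hh : h (Real.log x) = (- Real.log (x / y - x₀))⁻¹ := by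
      rw [hsh x hxpos, hlog (x / y) (by rw [habs]; exact ht0) (by rw [habs]; exact htδ), habs]
      rw [div_eq_mul_inv, inv_neg]; ring
    constructor
    · rw [hφ]
      simp only
      rw [indicator_of_mem (show x ∈ Ici (1:ℝ) from hx0), hh]
    · linarith
  constructor
  · -- upper bound
    have hle : μ (Ioc (y * x₀) (y * x₀ + 1))
        ≤ ENNReal.ofReal (M⁻¹ * ((y * x₀) ^ (-α - 1) * ((n : ℝ) * Real.log b)⁻¹)) := by
      rw [hμ, withDensity_apply _ measurableSet_Ioc]
      calc ∫⁻ x in Ioc (y * x₀) (y * x₀ + 1), ENNReal.ofReal (M⁻¹ * φ x)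
          ≤ ∫⁻ _x in Ioc (y * x₀) (y * x₀ + 1),
              ENNReal.ofReal (M⁻¹ * ((y * x₀) ^ (-α - 1) * ((n : ℝ) * Real.log b)⁻¹)) := by
            refine setLIntegral_mono' measurableSet_Ioc (fun x hx => ?_)
            apply ENNReal.ofReal_le_ofReal
            obtain ⟨heq, hpos'⟩ := hdens x hx.1 hx.2
            rw [heq]
            have hxp : x ^ (-α-1) ≤ (y * x₀) ^ (-α-1) :=
              Real.rpow_le_rpow_of_nonpos (by positivity) hx.1.le (by linarith)
            have hhle : (- Real.log (x / y - x₀))⁻¹ ≤ ((n:ℝ) * Real.log b)⁻¹ := by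
              apply inv_anti₀ hnlb
              have ht0 : 0 < x / y - x₀ := by
                rw [sub_pos, lt_div_iff₀ hy0]; nlinarith [hx.1]
              have ht1 : x / y - x₀ ≤ 1 / y := by
                rw [sub_le_iff_le_add, div_le_iff₀ hy0, add_mul, one_div, inv_mul_cancel₀ hy0.ne']
                linarith [hx.2]
              have hll := Real.log_le_log ht0 ht1
              rw [one_div, Real.log_inv, hlogy] at hll
              linarith
            have h2 : (0:ℝ) ≤ (- Real.log (x / y - x₀))⁻¹ := by positivity
            refine mul_le_mul_of_nonneg_left ?_ (by positivity)
            exact mul_le_mul hxp hhle h2 (Real.rpow_nonneg (by positivity) _)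
        _ = ENNReal.ofReal (M⁻¹ * ((y * x₀) ^ (-α - 1) * ((n : ℝ) * Real.log b)⁻¹)) := by
            rw [setLIntegral_const, Real.volume_Ioc]
            norm_num
    exact ENNReal.toReal_le_of_le_ofReal (by positivity) hle
  · -- positivity
    set L : ℝ := M⁻¹ * ((y * x₀ + 1) ^ (-α - 1) * (Real.log (2 * y))⁻¹) with hLdef
    have hlog2y : 0 < Real.log (2 * y) := Real.log_pos (by linarith)
    have hL0 : 0 < L := by
      have hr : (0:ℝ) < (y * x₀ + 1) ^ (-α-1) := Real.rpow_pos_of_pos (by positivity) _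
      positivity
    have hge : ENNReal.ofReal (L * (1/2)) ≤ μ (Ioc (y * x₀) (y * x₀ + 1)) := by
      rw [hμ, withDensity_apply _ measurableSet_Ioc]
      calc ENNReal.ofReal (L * (1/2))
          = ENNReal.ofReal L * volume (Ioc (y * x₀ + 1/2) (y * x₀ + 1)) := by
            rw [Real.volume_Ioc, ENNReal.ofReal_mul hL0.le]
            norm_num
        _ = ∫⁻ _x in Ioc (y * x₀ + 1/2) (y * x₀ + 1), ENNReal.ofReal L := by
            rw [setLIntegral_const]
        _ ≤ ∫⁻ x in Ioc (y * x₀ + 1/2) (y * x₀ + 1), ENNReal.ofReal (M⁻¹ * φ x) := by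
            refine setLIntegral_mono' measurableSet_Ioc (fun x hx => ?_)
            apply ENNReal.ofReal_le_ofReal
            have hx1 : y * x₀ < x := by linarith [hx.1]
            obtain ⟨heq, hpos'⟩ := hdens x hx1 hx.2
            rw [heq, hLdef]
            have hxp : (y * x₀ + 1) ^ (-α-1) ≤ x ^ (-α-1) :=
              Real.rpow_le_rpow_of_nonpos (by nlinarith) hx.2 (by linarith)
            have hhle : (Real.log (2*y))⁻¹ ≤ (- Real.log (x / y - x₀))⁻¹ := by
              apply inv_anti₀ hpos'
              have ht0 : (0:ℝ) < 1 / (2*y) := by positivity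
              have ht1 : 1 / (2*y) ≤ x / y - x₀ := by
                rw [le_sub_iff_add_le, ← sub_nonneg]
                have hexp : x / y - (1 / (2*y) + x₀) = (x - (y * x₀ + 1/2)) / y := by
                  field_simp; ring
                rw [hexp]
                apply div_nonneg _ hy0.le
                linarith [hx.1]
              have hll := Real.log_le_log ht0 ht1
              rw [one_div, Real.log_inv] at hll
              linarith
            refine mul_le_mul_of_nonneg_left ?_ (by positivity)
            exact mul_le_mul hxp hhle (by positivity)
              (Real.rpow_nonneg (by nlinarith [hx.1]) _)
        _ ≤ ∫⁻ x in Ioc (y * x₀) (y * x₀ + 1), ENNReal.ofReal (M⁻¹ * φ x) :=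
            lintegral_mono_set (Ioc_subset_Ioc_left (by linarith))
    refine ENNReal.toReal_pos ?_ (hμfin _)
    refine ne_of_gt (lt_of_lt_of_le ?_ hge)
    exact ENNReal.ofReal_pos.mpr (by positivity)

private lemma aux_num (x₀ b α c : ℝ) (hx₀ : 1 < x₀) (hb : x₀ < b) (hα : 0 < α)
    (h : ℝ → ℝ) (hper : Function.Periodic h (Real.log b))
    (x₁ x₂ : ℝ) (hx₁ : 0 < x₁) (hx₁₂ : x₁ < x₂) (hxb : x₀ + x₂ < b)
    (m : ℝ) (hm0 : 0 < m)
    (hmmin : ∀ w : ℝ, x₀ + x₁/2 ≤ w → w ≤ (x₀ + x₂ + b)/2 → m ≤ h (Real.log w))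
    (φ : ℝ → ℝ)
    (hφ : φ = fun x => indicator (Ici (1:ℝ)) (fun y => y ^ (-α - 1) * h (Real.log y)) x)
    (M : ℝ) (hM0 : 0 < M)
    (μ : Measure ℝ) (hμ : μ = volume.withDensity (fun x => ENNReal.ofReal (M⁻¹ * φ x)))
    (hμp : IsProbabilityMeasure μ)
    (μ₁ : Measure ℝ) (hμ₁p : IsProbabilityMeasure μ₁)
    (n : ℕ) (hn : 0 < n)
    (hBk : μ₁ (Ioc (-((b:ℝ) ^ n * x₂)) (-((b:ℝ) ^ n * x₁))) = ENNReal.ofReal (1 / Real.sqrt n))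
    (hyc1 : -c ≤ (b:ℝ) ^ n * x₁ / 2)
    (hyc2 : 1 + c ≤ (b:ℝ) ^ n * (b - x₀ - x₂) / 2)
    (hyc3 : 1 + c ≤ (b:ℝ) ^ n * (x₀ + x₂)) :
    M⁻¹ * (((b:ℝ) ^ n * (2 * (x₀ + x₂))) ^ (-α - 1) * m) * (1 / Real.sqrt n)
      ≤ ((mconv μ μ₁) (Ioc ((b:ℝ) ^ n * x₀ + c) ((b:ℝ) ^ n * x₀ + 1 + c))).toReal := by

  have hb1 : 1 < b := hx₀.trans hb
  have hb0 : 0 < b := lt_trans one_pos hb1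
  have hx₀0 : 0 < x₀ := lt_trans one_pos hx₀
  set y : ℝ := (b:ℝ) ^ n with hydef
  have hy1 : 1 ≤ y := one_le_pow₀ hb1.le
  have hy0 : 0 < y := lt_of_lt_of_le one_pos hy1
  have hlogy : Real.log y = (n:ℝ) * Real.log b := by rw [hydef, Real.log_pow]
  clear_value y
  clear hydef
  have hsh : ∀ x : ℝ, 0 < x → h (Real.log x) = h (Real.log (x / y)) := by
    intro x hx
    have heq : Real.log (x / y) = Real.log x - (n:ℝ) * Real.log b := by
      rw [Real.log_div hx.ne' hy0.ne', hlogy]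
    rw [heq, hper.sub_nat_mul_eq]
  set W : ℝ := 2 * (x₀ + x₂) with hWdef
  have hW0 : 0 < W := by rw [hWdef]; linarith
  set A' : ℝ := M⁻¹ * ((y * W) ^ (-α - 1) * m) with hA'def
  have hA'0 : 0 < A' := by
    have := Real.rpow_pos_of_pos (show (0:ℝ) < y * W by positivity) (-α-1)
    positivity
  -- density lower bound on the relevant region
  have hdens : ∀ u : ℝ, y * (x₀ + x₁) + c < u → u ≤ y * (x₀ + x₂) + 1 + c →
      A' ≤ M⁻¹ * φ u := by
    intro u hu1 hu2
    have hulo : y * (x₀ + x₁ / 2) ≤ u := by nlinarith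
    have hu1' : (1:ℝ) ≤ u := by nlinarith
    have hu0 : (0:ℝ) < u := by linarith
    have huW : u ≤ y * W := by rw [hWdef]; nlinarith
    have hdivlo : x₀ + x₁/2 ≤ u / y := by rw [le_div_iff₀ hy0]; nlinarith
    have hdivhi : u / y ≤ (x₀ + x₂ + b)/2 := by
      rw [div_le_iff₀ hy0]; nlinarith
    have hh : m ≤ h (Real.log u) := by
      rw [hsh u hu0]; exact hmmin _ hdivlo hdivhi
    have hup : (y * W) ^ (-α-1) ≤ u ^ (-α-1) :=
      Real.rpow_le_rpow_of_nonpos hu0 huW (by linarith)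
    rw [hφ]
    simp only
    rw [indicator_of_mem (show u ∈ Ici (1:ℝ) from hu1')]
    rw [hA'def]
    refine mul_le_mul_of_nonneg_left ?_ (by positivity)
    exact mul_le_mul hup hh hm0.le (Real.rpow_nonneg (by positivity) _)
  -- measure of translated interval bound
  have hslice : ∀ v : ℝ, v ∈ Ioc (-(y * x₂)) (-(y * x₁)) →
      ENNReal.ofReal A' ≤ μ (Ioc (y * x₀ + c - v) (y * x₀ + 1 + c - v)) := by
    intro v hv
    rw [hμ, withDensity_apply _ measurableSet_Ioc]
    calc ENNReal.ofReal A'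
        = ENNReal.ofReal A' * volume (Ioc (y * x₀ + c - v) (y * x₀ + 1 + c - v)) := by
          rw [Real.volume_Ioc]
          norm_num
      _ = ∫⁻ _x in Ioc (y * x₀ + c - v) (y * x₀ + 1 + c - v), ENNReal.ofReal A' := by
          rw [setLIntegral_const]
      _ ≤ ∫⁻ x in Ioc (y * x₀ + c - v) (y * x₀ + 1 + c - v), ENNReal.ofReal (M⁻¹ * φ x) := by
          refine setLIntegral_mono' measurableSet_Ioc (fun u hu => ?_)
          apply ENNReal.ofReal_le_ofReal
          refine hdens u ?_ ?_
          · have hexp : y * (x₀ + x₁) + c = y * x₀ + c + y * x₁ := by ring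
            have h1 := hv.2
            have h2 := hu.1
            linarith
          · have hexp : y * (x₀ + x₂) + 1 + c = y * x₀ + 1 + c + y * x₂ := by ring
            have h1 := hv.1
            have h2 := hu.2
            linarith
  -- main computation
  have hmap : (mconv μ μ₁) (Ioc (y * x₀ + c) (y * x₀ + 1 + c))
      = ∫⁻ v, μ (Ioc (y * x₀ + c - v) (y * x₀ + 1 + c - v)) ∂μ₁ := by
    rw [mconv, Measure.map_apply (by fun_prop : Measurable (fun p : ℝ × ℝ => p.1 + p.2)) measurableSet_Ioc,
      Measure.prod_apply_symm ((by fun_prop : Measurable (fun p : ℝ × ℝ => p.1 + p.2)) measurableSet_Ioc)]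
    congr 1
    ext v
    congr 1
    ext u
    simp only [mem_preimage, mem_Ioc]
    constructor
    · rintro ⟨h1, h2⟩; constructor <;> linarith
    · rintro ⟨h1, h2⟩; constructor <;> linarith
  have hge : ENNReal.ofReal (A' * (1 / Real.sqrt n))
      ≤ (mconv μ μ₁) (Ioc (y * x₀ + c) (y * x₀ + 1 + c)) := by
    rw [hmap]
    calc ENNReal.ofReal (A' * (1 / Real.sqrt n))
        = ENNReal.ofReal A' * μ₁ (Ioc (-(y * x₂)) (-(y * x₁))) := by
          rw [hBk, ENNReal.ofReal_mul hA'0.le]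
      _ = ∫⁻ _v in Ioc (-(y * x₂)) (-(y * x₁)), ENNReal.ofReal A' ∂μ₁ := by
          rw [setLIntegral_const]
      _ ≤ ∫⁻ v in Ioc (-(y * x₂)) (-(y * x₁)),
            μ (Ioc (y * x₀ + c - v) (y * x₀ + 1 + c - v)) ∂μ₁ :=
          setLIntegral_mono' measurableSet_Ioc hslice
      _ ≤ ∫⁻ v, μ (Ioc (y * x₀ + c - v) (y * x₀ + 1 + c - v)) ∂μ₁ :=
          setLIntegral_le_lintegral _ _
  have hfin : (mconv μ μ₁) (Ioc (y * x₀ + c) (y * x₀ + 1 + c)) ≠ ⊤ := by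
    rw [mconv]
    haveI := Measure.isProbabilityMeasure_map
      (μ := μ.prod μ₁) (by fun_prop : Measurable (fun p : ℝ × ℝ => p.1 + p.2)).aemeasurable
    exact measure_ne_top _ _
  exact (ENNReal.ofReal_le_iff_le_toReal hfin).mp hge

private lemma aux_alg (x₀ α W y N M logb m : ℝ)
    (hx₀ : 0 < x₀) (hW0 : 0 < W) (hy0 : 0 < y) (hN0 : 0 < N) (hM0 : 0 < M)
    (hlb : 0 < logb) (hm0 : 0 < m)
    (num den : ℝ)
    (hA : M⁻¹ * ((y * W) ^ (-α - 1) * m) * (1 / Real.sqrt N) ≤ num)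
    (hB : den ≤ M⁻¹ * ((y * x₀) ^ (-α - 1) * (N * logb)⁻¹))
    (hdpos : 0 < den) :
    m * logb * (x₀ / W) ^ (α + 1) * Real.sqrt N ≤ num / den := by

  set s := Real.sqrt N with hsdef
  have hs0 : 0 < s := Real.sqrt_pos.mpr hN0
  have e3 : s * s = N := Real.mul_self_sqrt hN0.le
  have e1 : (y * x₀) ^ (-α - 1) = (y * W) ^ (-α - 1) * (x₀ / W) ^ (-α - 1) := by
    rw [← Real.mul_rpow (by positivity) (by positivity)]
    congr 1
    field_simp
  have e2 : (x₀ / W) ^ (α + 1) * (x₀ / W) ^ (-α - 1) = 1 := by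
    rw [← Real.rpow_add (by positivity)]
    norm_num
  have ha1 : (0:ℝ) < (y * W) ^ (-α - 1) := Real.rpow_pos_of_pos (by positivity) _
  have hq1 : (0:ℝ) < (x₀ / W) ^ (α + 1) := Real.rpow_pos_of_pos (by positivity) _
  have hq2 : (0:ℝ) < (x₀ / W) ^ (-α - 1) := Real.rpow_pos_of_pos (by positivity) _
  have hRB : m * logb * (x₀ / W) ^ (α + 1) * s * (M⁻¹ * ((y * x₀) ^ (-α - 1) * (N * logb)⁻¹))
      = M⁻¹ * ((y * W) ^ (-α - 1) * m) * (1 / s) := by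
    rw [e1, ← e3]
    set a1 := (y * W) ^ (-α - 1)
    set q1 := (x₀ / W) ^ (α + 1)
    set q2 := (x₀ / W) ^ (-α - 1)
    field_simp
    linear_combination e2
  rw [le_div_iff₀ hdpos]
  calc m * logb * (x₀ / W) ^ (α + 1) * s * den
      ≤ m * logb * (x₀ / W) ^ (α + 1) * s * (M⁻¹ * ((y * x₀) ^ (-α - 1) * (N * logb)⁻¹)) := by
        refine mul_le_mul_of_nonneg_left hB (by positivity)
    _ = M⁻¹ * ((y * W) ^ (-α - 1) * m) * (1 / s) := hRB
    _ ≤ num := hA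

theorem stmt19
(x₀ b α δ : ℝ) (hx₀ : 1 < x₀) (hb : x₀ < b) (hα : 0 < α)
    (hδ0 : 0 < δ) (hδ1 : δ < 1) (hδ2 : δ < x₀ - 1) (hδ3 : δ < b - x₀)
    (h : ℝ → ℝ) (hcont : Continuous h) (hper : Function.Periodic h (Real.log b))
    (hpos : ∀ x : ℝ, x ∈ Ico 1 x₀ ∪ Ioc x₀ b → 0 < h (Real.log x))
    (hzero : h (Real.log x₀) = 0)
    (hlog : ∀ x : ℝ, 0 < |x - x₀| → |x - x₀| < δ → h (Real.log x) = -1 / Real.log |x - x₀|)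
    (φ : ℝ → ℝ)
    (hφ : φ = fun x => indicator (Ici (1:ℝ)) (fun y => y ^ (-α - 1) * h (Real.log y)) x)
    (M : ℝ) (hM : M = ∫ x, φ x)
    (μ : Measure ℝ) (hμ : μ = volume.withDensity (fun x => ENNReal.ofReal (M⁻¹ * φ x)))
    (x₁ x₂ : ℝ) (hx₁ : 0 < x₁) (hx₁₂ : x₁ < x₂) (hxb : x₀ + x₂ < b)
    (nk : ℕ → ℕ) (hmono : StrictMono nk) (hnkpos : ∀ k, 0 < nk k)
    (hsum : ∑' k : ℕ, (1 : ℝ) / Real.sqrt (nk k) = 1)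
    (μ₁ : Measure ℝ) (hμ₁p : IsProbabilityMeasure μ₁)
    (hμ₁B : ∀ k : ℕ,
      μ₁ (Ioc (-(b ^ nk k * x₂)) (-(b ^ nk k * x₁))) = ENNReal.ofReal (1 / Real.sqrt (nk k)))
    (hμ₁c : μ₁ ((⋃ k : ℕ, Ioc (-(b ^ nk k * x₂)) (-(b ^ nk k * x₁)))ᶜ) = 0) :
    ∀ c : ℝ, Tendsto (fun k : ℕ =>
        ((mconv μ μ₁) (Ioc (b ^ nk k * x₀ + c) (b ^ nk k * x₀ + 1 + c))).toReal /
          (μ (Ioc (b ^ nk k * x₀) (b ^ nk k * x₀ + 1))).toReal)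
      atTop atTop := by
  intro c
  have hb1 : 1 < b := hx₀.trans hb
  have hb0 : 0 < b := lt_trans one_pos hb1
  have hlb : 0 < Real.log b := Real.log_pos hb1
  have hx₀0 : 0 < x₀ := lt_trans one_pos hx₀
  -- reduction modulo the period
  have hred : ∀ t : ℝ, 0 ≤ t → ∃ s, 0 ≤ s ∧ s < Real.log b ∧ h t = h s := by
    intro t ht
    refine ⟨t - ⌊t / Real.log b⌋₊ * Real.log b, ?_, ?_, (hper.sub_nat_mul_eq _).symm⟩
    · have h1 : (⌊t / Real.log b⌋₊ : ℝ) ≤ t / Real.log b := Nat.floor_le (by positivity)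
      rw [le_div_iff₀ hlb] at h1; linarith
    · have h2 : t / Real.log b < ⌊t / Real.log b⌋₊ + 1 := Nat.lt_floor_add_one _
      rw [div_lt_iff₀ hlb] at h2; linarith
  have hnn : ∀ t : ℝ, 0 ≤ t → 0 ≤ h t := by
    intro t ht
    obtain ⟨s, hs0, hs1, hts⟩ := hred t ht
    rw [hts]
    have he1 : 1 ≤ Real.exp s := Real.one_le_exp hs0
    have heb : Real.exp s < b := by
      calc Real.exp s < Real.exp (Real.log b) := Real.exp_lt_exp.mpr hs1
        _ = b := Real.exp_log hb0
    have hls : Real.log (Real.exp s) = s := Real.log_exp s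
    rcases lt_trichotomy (Real.exp s) x₀ with hc|hc|hc
    · have := hpos _ (Or.inl ⟨he1, hc⟩); rw [hls] at this; exact this.le
    · have hsx : s = Real.log x₀ := by rw [← hls, hc]
      rw [hsx, hzero]
    · have := hpos _ (Or.inr ⟨hc, heb.le⟩); rw [hls] at this; exact this.le
  -- bound on h
  obtain ⟨z₀, hz₀m, hz₀⟩ := isCompact_Icc.exists_isMaxOn
    (s := Icc (0:ℝ) (Real.log b)) ⟨0, left_mem_Icc.mpr hlb.le⟩
    ((continuous_abs.comp hcont).continuousOn)
  have hC0 : 0 ≤ |h z₀| := abs_nonneg _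
  have hC : ∀ t : ℝ, 0 ≤ t → |h t| ≤ |h z₀| := by
    intro t ht
    obtain ⟨s, hs0, hs1, hts⟩ := hred t ht
    rw [hts]
    exact hz₀ ⟨hs0, hs1.le⟩
  -- φ basics
  have hφm : Measurable φ := by
    rw [hφ]
    have h1 : Measurable (fun y : ℝ => y ^ (-α - 1)) := by measurability
    exact (h1.mul (hcont.measurable.comp Real.measurable_log)).indicator measurableSet_Ici
  have hφnn : ∀ x, 0 ≤ φ x := by
    rw [hφ]
    refine fun x => indicator_nonneg (fun y hy => ?_) x
    have hy1 : (1:ℝ) ≤ y := hy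
    exact mul_nonneg (Real.rpow_nonneg (le_trans zero_le_one hy1) _)
      (hnn _ (Real.log_nonneg hy1))
  have hg : Integrable (indicator (Ici (1:ℝ)) fun y => |h z₀| * y ^ (-α-1)) := by
    rw [integrable_indicator_iff measurableSet_Ici]
    have h1 : IntegrableOn (fun y:ℝ => y ^ (-α-1)) (Ioi 1) :=
      (integrableOn_Ioi_rpow_iff one_pos).mpr (by linarith)
    exact (integrableOn_Ici_iff_integrableOn_Ioi (b := 1)).mpr (h1.const_mul _)
  have hint : Integrable φ := by
    refine hg.mono' (hφm.aestronglyMeasurable) (ae_of_all _ fun x => ?_)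
    rw [hφ]
    simp only [Real.norm_eq_abs]
    by_cases hx : x ∈ Ici (1:ℝ)
    · rw [indicator_of_mem hx, indicator_of_mem hx, abs_mul]
      have hx1 : (1:ℝ) ≤ x := hx
      have h1 : |x ^ (-α-1)| = x ^ (-α-1) :=
        abs_of_nonneg (Real.rpow_nonneg (le_trans zero_le_one hx1) _)
      rw [h1]
      calc x ^ (-α-1) * |h (Real.log x)| ≤ x ^ (-α-1) * |h z₀| :=
            mul_le_mul_of_nonneg_left (hC _ (Real.log_nonneg hx1))
              (Real.rpow_nonneg (le_trans zero_le_one hx1) _)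
        _ = |h z₀| * x ^ (-α-1) := mul_comm _ _
    · rw [indicator_of_notMem hx, indicator_of_notMem hx]; simp
  -- M positive and μ a probability measure
  have hM0 : 0 < M := by
    rw [hM]
    refine (integral_pos_iff_support_of_nonneg hφnn hint).2 ?_
    have hsub : Ioo x₀ b ⊆ Function.support φ := by
      intro x hx
      have hx1 : (1:ℝ) ≤ x := by linarith [hx.1]
      have hx0 : (0:ℝ) < x := by linarith
      have hh : 0 < h (Real.log x) := hpos x (Or.inr ⟨hx.1, hx.2.le⟩)
      rw [hφ]
      simp only [Function.mem_support]
      rw [indicator_of_mem (show x ∈ Ici (1:ℝ) from hx1)]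
      exact (mul_pos (Real.rpow_pos_of_pos hx0 _) hh).ne'
    calc (0:ENNReal) < ENNReal.ofReal (b - x₀) := ENNReal.ofReal_pos.mpr (by linarith)
      _ = volume (Ioo x₀ b) := (Real.volume_Ioo).symm
      _ ≤ volume (Function.support φ) := measure_mono hsub
  have hμuniv : μ univ = 1 := by
    rw [hμ, withDensity_apply _ MeasurableSet.univ, Measure.restrict_univ,
      ← ofReal_integral_eq_lintegral_ofReal (hint.const_mul _)
        (ae_of_all _ fun x => mul_nonneg (inv_nonneg.mpr hM0.le) (hφnn x))]
    rw [integral_const_mul, ← hM, inv_mul_cancel₀ hM0.ne', ENNReal.ofReal_one]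
  haveI hμprob : IsProbabilityMeasure μ := ⟨hμuniv⟩
  -- the minimum m of h on the relevant compact window
  have hlo0 : (0:ℝ) < x₀ + x₁ / 2 := by linarith
  have hhi0 : (0:ℝ) < (x₀ + x₂ + b) / 2 := by linarith
  have hlohi : x₀ + x₁ / 2 ≤ (x₀ + x₂ + b) / 2 := by linarith
  obtain ⟨z, hzm, hzmin⟩ := isCompact_Icc.exists_isMinOn
    (s := Icc (Real.log (x₀ + x₁ / 2)) (Real.log ((x₀ + x₂ + b) / 2)))
    ⟨Real.log (x₀ + x₁ / 2), left_mem_Icc.mpr (Real.log_le_log hlo0 hlohi)⟩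
    hcont.continuousOn
  have hm0 : 0 < h z := by
    have h1 : x₀ + x₁ / 2 ≤ Real.exp z := by
      rw [← Real.exp_log hlo0]; exact Real.exp_le_exp.mpr hzm.1
    have h2 : Real.exp z ≤ (x₀ + x₂ + b) / 2 := by
      rw [← Real.exp_log hhi0]; exact Real.exp_le_exp.mpr hzm.2
    have := hpos (Real.exp z) (Or.inr ⟨by linarith, by linarith⟩)
    rwa [Real.log_exp] at this
  have hmmin : ∀ w : ℝ, x₀ + x₁/2 ≤ w → w ≤ (x₀ + x₂ + b)/2 → h z ≤ h (Real.log w) := by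
    intro w hw1 hw2
    exact isMinOn_iff.mp hzmin _
      ⟨Real.log_le_log hlo0 hw1, Real.log_le_log (by linarith) hw2⟩
  -- limits
  have hy : Tendsto (fun k => (b:ℝ) ^ nk k) atTop atTop :=
    (tendsto_pow_atTop_atTop_of_one_lt hb1).comp hmono.tendsto_atTop
  have hsq : Tendsto (fun k => Real.sqrt (nk k)) atTop atTop := by
    have h1 : Tendsto (fun x : ℝ => x ^ (1/2 : ℝ)) atTop atTop :=
      tendsto_rpow_atTop (by norm_num)
    have h2 : Tendsto (fun k : ℕ => ((nk k : ℝ))) atTop atTop :=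
      tendsto_natCast_atTop_atTop.comp hmono.tendsto_atTop
    refine (h1.comp h2).congr (fun k => ?_)
    simp only [Function.comp]
    exact (Real.sqrt_eq_rpow _).symm
  have hW0 : (0:ℝ) < 2 * (x₀ + x₂) := by linarith
  have hR0 : 0 < h z * Real.log b * (x₀ / (2 * (x₀ + x₂))) ^ (α + 1) := by
    have := Real.rpow_pos_of_pos (show (0:ℝ) < x₀ / (2 * (x₀ + x₂)) by positivity) (α + 1)
    positivity
  have htendR : Tendsto
      (fun k => h z * Real.log b * (x₀ / (2 * (x₀ + x₂))) ^ (α + 1) * Real.sqrt (nk k))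
      atTop atTop :=
    Tendsto.const_mul_atTop hR0 hsq
  refine tendsto_atTop_mono' atTop ?_ htendR
  filter_upwards [hy.eventually_ge_atTop
    (max (max (2/δ) (2*(1+|c|)/x₁)) (max (2*(1+|c|)/(b-x₀-x₂)) ((1+|c|)/(x₀+x₂))))]
    with k hk
  have hn : 0 < nk k := hnkpos k
  have hy1 : (1:ℝ) ≤ b ^ nk k := one_le_pow₀ hb1.le
  have hy0 : (0:ℝ) < b ^ nk k := lt_of_lt_of_le one_pos hy1
  have habs1 : -c ≤ |c| := neg_le_abs c
  have habs2 : c ≤ |c| := le_abs_self c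
  have hyδ : 1 / (b ^ nk k : ℝ) < δ := by
    have h1 : 2/δ ≤ (b:ℝ) ^ nk k :=
      le_trans (le_trans (le_max_left _ _) (le_max_left _ _)) hk
    rw [div_le_iff₀ hδ0] at h1
    rw [div_lt_iff₀ hy0]
    nlinarith
  have hyc1 : -c ≤ (b:ℝ) ^ nk k * x₁ / 2 := by
    have h1 : 2*(1+|c|)/x₁ ≤ (b:ℝ) ^ nk k :=
      le_trans (le_trans (le_max_right _ _) (le_max_left _ _)) hk
    rw [div_le_iff₀ hx₁] at h1
    linarith
  have hyc2 : 1 + c ≤ (b:ℝ) ^ nk k * (b - x₀ - x₂) / 2 := by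
    have h1 : 2*(1+|c|)/(b-x₀-x₂) ≤ (b:ℝ) ^ nk k :=
      le_trans (le_trans (le_max_left _ _) (le_max_right _ _)) hk
    rw [div_le_iff₀ (by linarith : (0:ℝ) < b - x₀ - x₂)] at h1
    linarith
  have hyc3 : 1 + c ≤ (b:ℝ) ^ nk k * (x₀ + x₂) := by
    have h1 : (1+|c|)/(x₀+x₂) ≤ (b:ℝ) ^ nk k :=
      le_trans (le_trans (le_max_right _ _) (le_max_right _ _)) hk
    rw [div_le_iff₀ (by linarith : (0:ℝ) < x₀ + x₂)] at h1
    linarith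
  obtain ⟨hdenU, hdenP⟩ := aux_den x₀ b α δ hx₀ hb hα hδ0 hδ1 h hper hlog φ hφ M hM0 μ hμ
    (fun s => measure_ne_top μ s) (nk k) hn hyδ
  have hnum := aux_num x₀ b α c hx₀ hb hα h hper x₁ x₂ hx₁ hx₁₂ hxb (h z) hm0 hmmin
    φ hφ M hM0 μ hμ hμprob μ₁ hμ₁p (nk k) hn (hμ₁B k) hyc1 hyc2 hyc3
  have hN0 : (0:ℝ) < (nk k : ℝ) := by exact_mod_cast hn
  exact aux_alg x₀ α (2 * (x₀ + x₂)) ((b:ℝ) ^ nk k) ((nk k : ℝ)) M (Real.log b) (h z)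
    hx₀0 hW0 hy0 hN0 hM0 hlb hm0 _ _ hnum hdenU hdenP
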